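/- arXiv:0803.2699 — 7 statements merged into one kernel-verified Lean document; each statement's English description precedes it below -/
import Mathlib

section
/- Let ℓ be a positive integer and let λ = (λ_1,…,λ_ℓ) and μ = (μ_1,…,μ_ℓ) be non-increasing sequences of non-negative integers with the same weight, i.e. λ_1+⋯+λ_ℓ = μ_1+⋯+μ_ℓ. If λ dominates μ, then for every positive integer k the sequence λ^(k) dominates μ^(k). -/
/-- `Dominates l m` : `l` dominates `m`, i.e. all partial sums of `l` are at
least the corresponding partial sums of `m` (entries beyond the length count as 0). -/
def Dominates (l m : List ℕ) : Prop := ∀ i : ℕ, (m.take i).sum ≤ (l.take i).sum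

/-- `opk k l` is the sequence `l^(k)` : the values `|lᵢ - k|` reordered in
non-increasing order. -/
def opk (k : ℕ) (l : List ℕ) : List ℕ :=
  (l.map (fun x => Nat.dist x k)).insertionSort (· ≥ ·)

open List

/-- For a non-increasing list, the sum of `take n` of the tail is at most the
sum of `take n` of the whole list. -/
lemma aux_tail_take_sum {a : ℕ} {s : List ℕ} (h : (a :: s).Pairwise (· ≥ ·)) (n : ℕ) :
    (s.take n).sum ≤ ((a :: s).take n).sum := by
  cases n with
  | zero => simp
  | succ n =>
    rw [List.take_succ_cons, List.sum_cons, List.take_succ, List.sum_append]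
    have h2 : s[n]?.toList.sum ≤ a := by
      cases hx : s[n]? with
      | none => simp
      | some x =>
        have hmem : x ∈ s := by
          obtain ⟨hlt, hget⟩ := List.getElem?_eq_some_iff.mp hx
          exact hget ▸ List.getElem_mem hlt
        simpa using List.rel_of_pairwise_cons h hmem
    omega

/-- Sum of a sublist of a non-increasing list is at most the corresponding
prefix sum. -/
lemma aux_sublist_sum_le : ∀ {t s : List ℕ}, t <+ s → s.Pairwise (· ≥ ·) →
    t.sum ≤ (s.take t.length).sum := by
  intro t s h
  induction h with
  | slnil => simp
  | cons a h ih =>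
    intro hs
    exact le_trans (ih hs.of_cons) (aux_tail_take_sum hs _)
  | cons_cons a h ih =>
    intro hs
    simp only [List.length_cons, List.take_succ_cons, List.sum_cons]
    exact Nat.add_le_add_left (ih hs.of_cons) a

/-- Multiset version: any sub-multiset of a non-increasing list has sum at
most the corresponding prefix sum. -/
lemma aux_multiset_sum_le {s : List ℕ} (hs : s.Pairwise (· ≥ ·)) {u : Multiset ℕ}
    (hu : u ≤ ↑s) : u.sum ≤ (s.take (Multiset.card u)).sum := by
  obtain ⟨t, ht⟩ : ∃ t : List ℕ, ↑t = u := ⟨u.toList, Multiset.coe_toList u⟩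
  subst ht
  rw [Multiset.coe_le] at hu
  obtain ⟨t', hperm, hsub⟩ := hu
  have h1 : t'.sum ≤ (s.take t'.length).sum := aux_sublist_sum_le hsub hs
  rw [Multiset.coe_card, Multiset.sum_coe, ← hperm.length_eq, ← hperm.sum_eq]
  exact h1

/-- Prefix sums are monotone in the length (for lists of naturals). -/
lemma aux_take_sum_mono {s : List ℕ} {j i : ℕ} (h : j ≤ i) :
    (s.take j).sum ≤ (s.take i).sum := by
  conv_rhs => rw [← List.take_append_drop j (s.take i)]
  rw [List.sum_append, List.take_take, Nat.min_eq_left h]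
  omega

lemma aux_dist_eq (x k : ℕ) : Nat.dist x k = (x - k) + (k - x) := rfl

lemma aux_dist_cast_ge (x k : ℕ) (h : k ≤ x) : ((Nat.dist x k : ℕ) : ℤ) = (x : ℤ) - k := by
  rw [aux_dist_eq]; omega

lemma aux_dist_cast_le (x k : ℕ) (h : x ≤ k) : ((Nat.dist x k : ℕ) : ℤ) = (k : ℤ) - x := by
  rw [aux_dist_eq]; omega

lemma aux_dist_lb1 (x k : ℕ) : (x : ℤ) - k ≤ ((Nat.dist x k : ℕ) : ℤ) := by
  rw [aux_dist_eq]; omega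

lemma aux_dist_lb2 (x k : ℕ) : (k : ℤ) - x ≤ ((Nat.dist x k : ℕ) : ℤ) := by
  rw [aux_dist_eq]; omega

/-- Sum of distances when all entries are at least `k`. -/
lemma aux_sumA {k : ℕ} : ∀ {s : List ℕ}, (∀ x ∈ s, k ≤ x) →
    (((s.map (fun x => Nat.dist x k)).sum : ℕ) : ℤ) = (s.sum : ℤ) - s.length * k := by
  intro s
  induction s with
  | nil => simp
  | cons a t ih =>
    intro h
    have ha : k ≤ a := h a (List.mem_cons_self)
    have ht := ih (fun x hx => h x (List.mem_cons_of_mem a hx))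
    simp only [List.map_cons, List.sum_cons, List.length_cons]
    rw [Nat.cast_add, ht, aux_dist_cast_ge a k ha]
    push_cast
    ring

/-- Sum of distances when all entries are at most `k`. -/
lemma aux_sumB {k : ℕ} : ∀ {s : List ℕ}, (∀ x ∈ s, x ≤ k) →
    (((s.map (fun x => Nat.dist x k)).sum : ℕ) : ℤ) = (k : ℤ) * s.length - s.sum := by
  intro s
  induction s with
  | nil => simp
  | cons a t ih =>
    intro h
    have ha : a ≤ k := h a (List.mem_cons_self)
    have ht := ih (fun x hx => h x (List.mem_cons_of_mem a hx))
    simp only [List.map_cons, List.sum_cons, List.length_cons]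
    rw [Nat.cast_add, ht, aux_dist_cast_le a k ha]
    push_cast
    ring

/-- Pointwise lower bounds on sums of distances. -/
lemma aux_sum_lower {k : ℕ} : ∀ (s : List ℕ),
    (s.sum : ℤ) - s.length * k ≤ (((s.map (fun x => Nat.dist x k)).sum : ℕ) : ℤ) ∧
    (k : ℤ) * s.length - s.sum ≤ (((s.map (fun x => Nat.dist x k)).sum : ℕ) : ℤ) := by
  intro s
  induction s with
  | nil => simp
  | cons a t ih =>
    simp only [List.map_cons, List.sum_cons, List.length_cons]
    have hd1 := aux_dist_lb1 a k
    have hd2 := aux_dist_lb2 a k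
    have h1 := ih.1
    have h2 := ih.2
    have hr1 : ((t.length : ℤ) + 1) * (k : ℤ) = (t.length : ℤ) * k + k := by ring
    have hr2 : (k : ℤ) * ((t.length : ℤ) + 1) = (k : ℤ) * t.length + k := by ring
    have hc : ((Nat.dist a k + (t.map (fun x => Nat.dist x k)).sum : ℕ) : ℤ)
        = ((Nat.dist a k : ℕ) : ℤ) + (((t.map (fun x => Nat.dist x k)).sum : ℕ) : ℤ) :=
      Nat.cast_add _ _
    have hc2 : ((a + t.sum : ℕ) : ℤ) = (a : ℤ) + (t.sum : ℤ) := Nat.cast_add _ _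
    have hc3 : ((t.length + 1 : ℕ) : ℤ) = (t.length : ℤ) + 1 := Nat.cast_succ _
    have hr1' : ((t.length + 1 : ℕ) : ℤ) * (k : ℤ) = (t.length : ℤ) * k + k := by
      rw [hc3]; ring
    have hr2' : (k : ℤ) * ((t.length + 1 : ℕ) : ℤ) = (k : ℤ) * t.length + k := by
      rw [hc3]; ring
    constructor
    · rw [hc]
      linarith [hd1, h1, hc2, hr1']
    · rw [hc]
      linarith [hd2, h2, hc2, hr2']

/-- The "lower" estimate: any prefix-`a` + suffix-`b` signed selection bounds
the partial sums of `opk k l` from below. -/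
lemma aux_lower (k : ℕ) (l : List ℕ) (i a b : ℕ) (hab : a + b ≤ l.length) (habi : a + b ≤ i) :
    ((l.take a).sum : ℤ) - a * k + ((b : ℤ) * k - ((l.sum : ℤ) - ((l.take (l.length - b)).sum : ℤ)))
      ≤ (((opk k l).take i).sum : ℤ) := by
  set f : ℕ → ℕ := fun x => Nat.dist x k with hf
  set w : List ℕ := l.take a ++ l.drop (l.length - b) with hw
  -- w is a sublist of l
  have hwsub : w <+ l := by
    have h1 : l.drop (l.length - b) <+ l.drop a := by
      have he : l.drop (l.length - b) = (l.drop a).drop (l.length - b - a) := by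
        rw [List.drop_drop]
        congr 1
        omega
      rw [he]
      exact List.drop_sublist _ _
    have h2 : w <+ l.take a ++ l.drop a := List.Sublist.append_left h1 _
    rw [List.take_append_drop] at h2
    exact h2
  have hwmap : w.map f <+ l.map f := List.Sublist.map f hwsub
  have hsorted : (opk k l).Pairwise (· ≥ ·) := List.pairwise_insertionSort _ _
  have hperm : opk k l ~ l.map f := List.perm_insertionSort _ _
  have hle : (↑(w.map f) : Multiset ℕ) ≤ ↑(opk k l) := by
    rw [Multiset.coe_le]
    exact hwmap.subperm.trans hperm.symm.subperm
  have h1 : (w.map f).sum ≤ ((opk k l).take (w.map f).length).sum := by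
    have := aux_multiset_sum_le hsorted hle
    simpa using this
  have hwlen : w.length = a + b := by
    rw [hw, List.length_append, List.length_take, List.length_drop]
    omega
  have h2 : ((opk k l).take (w.map f).length).sum ≤ ((opk k l).take i).sum := by
    apply aux_take_sum_mono
    rw [List.length_map, hwlen]
    exact habi
  have hA := (aux_sum_lower (k := k) (l.take a)).1
  have hB := (aux_sum_lower (k := k) (l.drop (l.length - b))).2
  have hlenA : (l.take a).length = a := by
    rw [List.length_take]; omega
  have hlenB : (l.drop (l.length - b)).length = b := by
    rw [List.length_drop]; omega
  have hsumB : ((l.drop (l.length - b)).sum : ℤ) = (l.sum : ℤ) - (l.take (l.length - b)).sum := by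
    have hs : (l.take (l.length - b)).sum + (l.drop (l.length - b)).sum = l.sum := by
      rw [← List.sum_append, List.take_append_drop]
    omega
  have hwsum : ((w.map f).sum : ℤ) =
      (((l.take a).map f).sum : ℤ) + (((l.drop (l.length - b)).map f).sum : ℤ) := by
    rw [hw, List.map_append, List.sum_append]
    push_cast
    ring
  rw [hlenA] at hA
  rw [hlenB, hsumB] at hB
  have h3 : ((w.map f).sum : ℤ) ≤ (((opk k l).take i).sum : ℤ) := by
    exact_mod_cast le_trans h1 h2
  linarith [hA, hB]

/-- The "upper" estimate: each partial sum of `opk k m` is bounded by some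
prefix-`a` + suffix-`b` signed selection. -/
lemma aux_upper (k : ℕ) (m : List ℕ) (hm : m.Pairwise (· ≥ ·)) (i : ℕ) :
    ∃ a b, a + b ≤ m.length ∧ a + b ≤ i ∧
      (((opk k m).take i).sum : ℤ) ≤
        ((m.take a).sum : ℤ) - a * k +
          ((b : ℤ) * k - ((m.sum : ℤ) - ((m.take (m.length - b)).sum : ℤ))) := by
  classical
  set f : ℕ → ℕ := fun x => Nat.dist x k with hf
  set m₁ : List ℕ := m.takeWhile (fun x => k ≤ x) with hm₁
  set m₂ : List ℕ := m.dropWhile (fun x => k ≤ x) with hm₂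
  have hsplit : m₁ ++ m₂ = m := by
    rw [hm₁, hm₂]; exact List.takeWhile_append_dropWhile
  set p : ℕ := m₁.length with hp
  have hm₁mem : ∀ x ∈ m₁, k ≤ x := by
    intro x hx
    have := List.mem_takeWhile_imp hx
    simpa using this
  have hm₂sorted : m₂.Pairwise (· ≥ ·) := by
    have hsub : m₂ <+ m := by
      rw [← hsplit]; exact List.sublist_append_right _ _
    exact List.Pairwise.sublist hsub hm
  have hm₁sorted : m₁.Pairwise (· ≥ ·) := by
    have hsub : m₁ <+ m := by
      rw [← hsplit]; exact List.sublist_append_left _ _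
    exact List.Pairwise.sublist hsub hm
  have hm₂mem : ∀ x ∈ m₂, x ≤ k := by
    intro x hx
    obtain ⟨hd, tl, hm2⟩ : ∃ hd tl, m₂ = hd :: tl := by
      cases hmm : m₂ with
      | nil => rw [hmm] at hx; simp at hx
      | cons hd tl => exact ⟨hd, tl, rfl⟩
    have hdw : m.dropWhile (fun x => k ≤ x) = hd :: tl := by rw [← hm₂, hm2]
    have hhead : ¬ (k ≤ hd) := by
      have h2 := List.head_dropWhile_not (fun x => decide (k ≤ x)) (l := m)
        (by rw [hdw]; simp)
      simp only [hdw, List.head_cons] at h2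
      simpa using h2
    rw [hm2] at hx
    rcases List.mem_cons.mp hx with rfl | hx'
    · omega
    · have := List.rel_of_pairwise_cons (hm2 ▸ hm₂sorted) hx'
      omega
  set M₁ : List ℕ := m₁.map f with hM₁
  set M₂ : List ℕ := m₂.map f with hM₂
  have hM₁sorted : M₁.Pairwise (· ≥ ·) := by
    rw [hM₁, List.pairwise_map]
    apply List.Pairwise.imp_of_mem (l := m₁) ?_ hm₁sorted
    intro x y hxm hym hxy
    have hkx := hm₁mem x hxm
    have hky := hm₁mem y hym
    simp only [hf, aux_dist_eq, ge_iff_le]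
    omega
  have hM₂rev_sorted : M₂.reverse.Pairwise (· ≥ ·) := by
    rw [List.pairwise_reverse, hM₂, List.pairwise_map]
    apply List.Pairwise.imp_of_mem (l := m₂) ?_ hm₂sorted
    intro x y hxm hym hxy
    have hkx := hm₂mem x hxm
    have hky := hm₂mem y hym
    simp only [hf, aux_dist_eq, flip]
    omega
  set t : List ℕ := (opk k m).take i with ht
  have hperm : opk k m ~ m.map f := List.perm_insertionSort _ _
  have hmap_split : m.map f = M₁ ++ M₂ := by
    rw [← hsplit, List.map_append]
  have htle : (↑t : Multiset ℕ) ≤ ↑M₁ + ↑M₂ := by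
    have h1 : (↑t : Multiset ℕ) ≤ ↑(opk k m) := by
      rw [Multiset.coe_le]
      exact (List.take_sublist _ _).subperm
    have h2 : (↑(opk k m) : Multiset ℕ) = ↑(m.map f) := Multiset.coe_eq_coe.mpr hperm
    rw [h2, hmap_split] at h1
    simpa using h1
  set v : Multiset ℕ := (↑t : Multiset ℕ) - ↑M₁ with hv
  set u : Multiset ℕ := (↑t : Multiset ℕ) - v with hu
  have hvle : v ≤ ↑M₂ := by
    rw [hv, tsub_le_iff_left]
    exact htle
  have hvt : v ≤ (↑t : Multiset ℕ) := Multiset.sub_le_self _ _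
  have huv : u + v = ↑t := by
    rw [hu]
    exact tsub_add_cancel_of_le hvt
  have hule : u ≤ ↑M₁ := by
    rw [Multiset.le_iff_count]
    intro x
    rw [hu, hv]
    simp only [Multiset.count_sub]
    omega
  set a : ℕ := Multiset.card u with ha
  set b : ℕ := Multiset.card v with hb
  have hap : a ≤ p := by
    have := Multiset.card_le_card hule
    simpa [hp, hM₁] using this
  have hbq : b ≤ m₂.length := by
    have := Multiset.card_le_card hvle
    simpa [hM₂] using this
  have hmlen : m.length = p + m₂.length := by
    rw [← hsplit, List.length_append]
  have htlen : t.length = a + b := by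
    have h1 : Multiset.card (↑t : Multiset ℕ) = a + b := by
      rw [← huv, Multiset.card_add]
    simpa using h1
  have htleni : t.length ≤ i := by
    rw [ht, List.length_take]; omega
  refine ⟨a, b, by omega, by omega, ?_⟩
  have husum : u.sum ≤ (M₁.take a).sum := aux_multiset_sum_le hM₁sorted hule
  have hvle' : v ≤ (↑M₂.reverse : Multiset ℕ) := by
    have he : (↑M₂.reverse : Multiset ℕ) = ↑M₂ := Multiset.coe_eq_coe.mpr (List.reverse_perm M₂)
    rw [he]
    exact hvle
  have hvsum : v.sum ≤ (M₂.reverse.take b).sum := aux_multiset_sum_le hM₂rev_sorted hvle'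
  have htsum : t.sum = u.sum + v.sum := by
    have := congrArg Multiset.sum huv
    simpa using this.symm
  have hM₁take : M₁.take a = (m₁.take a).map f := by
    rw [hM₁, List.map_take]
  have hM₂take : M₂.reverse.take b = (M₂.drop (M₂.length - b)).reverse := by
    have h := List.reverse_take (l := M₂.reverse) (i := b)
    rw [List.reverse_reverse, List.length_reverse] at h
    calc M₂.reverse.take b = (M₂.reverse.take b).reverse.reverse := (List.reverse_reverse _).symm
      _ = (M₂.drop (M₂.length - b)).reverse := by rw [h]
  have hM₂drop : M₂.drop (M₂.length - b) = (m₂.drop (m₂.length - b)).map f := by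
    rw [hM₂, List.map_drop, List.length_map]
  have hAsum : ((M₁.take a).sum : ℤ) = ((m₁.take a).sum : ℤ) - a * k := by
    rw [hM₁take, aux_sumA (fun x hx => hm₁mem x (List.mem_of_mem_take hx))]
    have he : (m₁.take a).length = a := by rw [List.length_take]; omega
    rw [he]
  have hBsum : ((M₂.reverse.take b).sum : ℤ)
      = (b : ℤ) * k - ((m₂.drop (m₂.length - b)).sum : ℤ) := by
    rw [hM₂take, List.sum_reverse, hM₂drop,
      aux_sumB (fun x hx => hm₂mem x (List.mem_of_mem_drop hx))]
    have he : (m₂.drop (m₂.length - b)).length = b := by rw [List.length_drop]; omega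
    rw [he]
    ring
  have htake_a : m.take a = m₁.take a := by
    conv_lhs => rw [← hsplit]
    exact List.take_append_of_le_length hap
  have hdropsum : ((m₂.drop (m₂.length - b)).sum : ℤ)
      = (m.sum : ℤ) - ((m.take (m.length - b)).sum : ℤ) := by
    have h1 : m.take (m.length - b) = m₁ ++ m₂.take (m₂.length - b) := by
      rw [show m.length - b = m₁.length + (m₂.length - b) by omega]
      conv_lhs => rw [← hsplit]
      exact List.take_length_add_append _
    have h2 : (m₂.take (m₂.length - b)).sum + (m₂.drop (m₂.length - b)).sum = m₂.sum := by
      rw [← List.sum_append, List.take_append_drop]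
    have h3 : m₁.sum + m₂.sum = m.sum := by
      rw [← List.sum_append, hsplit]
    rw [h1, List.sum_append]
    omega
  have hfinal : (t.sum : ℤ) ≤ ((m.take a).sum : ℤ) - a * k +
      ((b : ℤ) * k - ((m.sum : ℤ) - ((m.take (m.length - b)).sum : ℤ))) := by
    rw [htake_a]
    have h1 : (t.sum : ℤ) = (u.sum : ℤ) + (v.sum : ℤ) := by exact_mod_cast htsum
    have h2 : (u.sum : ℤ) ≤ ((M₁.take a).sum : ℤ) := by exact_mod_cast husum
    have h3 : (v.sum : ℤ) ≤ ((M₂.reverse.take b).sum : ℤ) := by exact_mod_cast hvsum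
    rw [hAsum] at h2
    rw [hBsum, hdropsum] at h3
    linarith
  exact hfinal

theorem dominance_preserved_under_opk
    (ℓ : ℕ) (hℓ : 0 < ℓ) (l m : List ℕ)
    (hllen : l.length = ℓ) (hmlen : m.length = ℓ)
    (hlsort : l.Pairwise (· ≥ ·)) (hmsort : m.Pairwise (· ≥ ·))
    (hweight : l.sum = m.sum) (hdom : Dominates l m)
    (k : ℕ) (hk : 0 < k) :
    Dominates (opk k l) (opk k m) := by
  intro i
  obtain ⟨a, b, hab, habi, hub⟩ := aux_upper k m hmsort i
  have hab' : a + b ≤ l.length := by rw [hllen]; rw [hmlen] at hab; exact hab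
  have hlb := aux_lower k l i a b hab' habi
  have hmid : ((m.take a).sum : ℤ) - a * k +
        ((b : ℤ) * k - ((m.sum : ℤ) - ((m.take (m.length - b)).sum : ℤ)))
      ≤ ((l.take a).sum : ℤ) - a * k +
        ((b : ℤ) * k - ((l.sum : ℤ) - ((l.take (l.length - b)).sum : ℤ))) := by
    have h1 : ((m.take a).sum : ℤ) ≤ ((l.take a).sum : ℤ) := by exact_mod_cast hdom a
    have h2 : ((m.take (m.length - b)).sum : ℤ) ≤ ((l.take (l.length - b)).sum : ℤ) := by
      have he : m.length - b = l.length - b := by rw [hllen, hmlen]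
      rw [he]
      exact_mod_cast hdom (l.length - b)
    have h3 : (l.sum : ℤ) = (m.sum : ℤ) := by exact_mod_cast hweight
    linarith
  have hfin : (((opk k m).take i).sum : ℤ) ≤ (((opk k l).take i).sum : ℤ) :=
    le_trans hub (le_trans hmid hlb)
  exact_mod_cast hfin
end

section
/- Let λ and μ be partitions of the same weight n, completed with zeroes so that both have length ℓ. If λ covers μ in the dominance order on partitions of n (i.e. λ > μ and there is no partition ν of n with λ > ν > μ), then for every positive integer k the sequence λ^(k) dominates μ^(k). -/
open List

private lemma take_succ_sum_le_aux (a : ℕ) :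
    ∀ (u : List ℕ) (n : ℕ), (∀ x ∈ u, x ≤ a) → (u.take (n+1)).sum ≤ a + (u.take n).sum := by
  intro u
  induction u with
  | nil => simp
  | cons x u ih =>
    intro n h
    cases n with
    | zero => simpa using h x (mem_cons_self)
    | succ n =>
      simp only [take_succ_cons, sum_cons]
      have := ih n (fun y hy => h y (mem_cons_of_mem _ hy))
      omega

private lemma take_succ_sum_ge_aux (a : ℕ) :
    ∀ (u : List ℕ) (n : ℕ), (∀ x ∈ u, a ≤ x) → n < u.length →
      a + (u.take n).sum ≤ (u.take (n+1)).sum := by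
  intro u
  induction u with
  | nil => simp
  | cons x u ih =>
    intro n h hn
    cases n with
    | zero => simpa using h x (mem_cons_self)
    | succ n =>
      simp only [take_succ_cons, sum_cons]
      have := ih n (fun y hy => h y (mem_cons_of_mem _ hy)) (by simpa using hn)
      omega

private lemma sum_le_take_of_sublist : ∀ {u t : List ℕ}, t <+ u → u.Pairwise (· ≥ ·) →
    t.sum ≤ (u.take t.length).sum := by
  intro u t h
  induction h with
  | slnil => simp
  | @cons t u a h ih =>
    intro hs
    rw [pairwise_cons] at hs
    rcases Nat.eq_zero_or_pos t.length with h0 | hp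
    · simp [List.length_eq_zero_iff.mp h0]
    · obtain ⟨p, hp2⟩ : ∃ p, t.length = p + 1 := ⟨t.length - 1, by omega⟩
      rw [hp2, take_succ_cons, sum_cons]
      have h1 := ih hs.2
      have h2 := take_succ_sum_le_aux a u p (fun x hx => hs.1 x hx)
      rw [hp2] at h1
      omega
  | @cons_cons t u a h ih =>
    intro hs
    rw [pairwise_cons] at hs
    simp only [length_cons, take_succ_cons, sum_cons]
    exact Nat.add_le_add_left (ih hs.2) a

private lemma take_le_sum_of_sublist : ∀ {u t : List ℕ}, t <+ u → u.Pairwise (· ≤ ·) →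
    (u.take t.length).sum ≤ t.sum := by
  intro u t h
  induction h with
  | slnil => simp
  | @cons t u a h ih =>
    intro hs
    rw [pairwise_cons] at hs
    rcases Nat.eq_zero_or_pos t.length with h0 | hp
    · simp [h0]
    · obtain ⟨p, hp2⟩ : ∃ p, t.length = p + 1 := ⟨t.length - 1, by omega⟩
      rw [hp2, take_succ_cons, sum_cons]
      have h1 := ih hs.2
      have hlen : t.length ≤ u.length := h.length_le
      have h2 := take_succ_sum_ge_aux a u p (fun x hx => hs.1 x hx) (by omega)
      rw [hp2] at h1
      omega
  | @cons_cons t u a h ih =>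
    intro hs
    rw [pairwise_cons] at hs
    simp only [length_cons, take_succ_cons, sum_cons]
    exact Nat.add_le_add_left (ih hs.2) a

private lemma sum_le_take_of_subperm {u t : List ℕ} (h : t <+~ u) (hu : u.Pairwise (· ≥ ·)) :
    t.sum ≤ (u.take t.length).sum := by
  obtain ⟨t', hp, hs⟩ := h
  calc t.sum = t'.sum := hp.sum_eq.symm
  _ ≤ (u.take t'.length).sum := sum_le_take_of_sublist hs hu
  _ = (u.take t.length).sum := by rw [hp.length_eq]

private lemma bot_le_sum_of_subperm {u t : List ℕ} (h : t <+~ u) (hu : u.Pairwise (· ≥ ·)) :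
    (u.drop (u.length - t.length)).sum ≤ t.sum := by
  obtain ⟨t', hp, hs⟩ := h
  have hrev : t'.reverse <+ u.reverse := hs.reverse
  have husort : u.reverse.Pairwise (· ≤ ·) := by
    rw [pairwise_reverse]; exact hu
  have h1 := take_le_sum_of_sublist hrev husort
  have key : ∀ j : ℕ, (u.reverse.take j).sum = (u.drop (u.length - j)).sum := by
    intro j
    have h2 : (u.reverse.take j).reverse = u.drop (u.length - j) := by
      rw [reverse_take, reverse_reverse, length_reverse]
    calc (u.reverse.take j).sum = (u.reverse.take j).reverse.sum := (sum_reverse _).symm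
    _ = (u.drop (u.length - j)).sum := by rw [h2]
  rw [length_reverse, key, sum_reverse] at h1
  rw [hp.length_eq] at h1
  calc (u.drop (u.length - t.length)).sum ≤ t'.sum := h1
  _ = t.sum := hp.sum_eq

private lemma take_sum_mono {u : List ℕ} {i j : ℕ} (h : i ≤ j) :
    (u.take i).sum ≤ (u.take j).sum := by
  have h1 : (u.take j).take i ++ (u.take j).drop i = u.take j := take_append_drop _ _
  have h2 : (u.take j).take i = u.take i := by rw [take_take, min_eq_left h]
  have := congrArg List.sum h1
  rw [sum_append, h2] at this
  omega

private lemma map_dist_lower1 (k : ℕ) (A : List ℕ) :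
    A.sum ≤ (A.map (fun x => Nat.dist x k)).sum + A.length * k := by
  induction A with
  | nil => simp
  | cons x A ih =>
    have h1 : x ≤ Nat.dist x k + k := Nat.dist_tri_left' x k
    simp only [map_cons, sum_cons, length_cons]
    have : (A.length + 1) * k = A.length * k + k := by ring
    omega

private lemma map_dist_lower2 (k : ℕ) (A : List ℕ) :
    A.length * k ≤ (A.map (fun x => Nat.dist x k)).sum + A.sum := by
  induction A with
  | nil => simp
  | cons x A ih =>
    have h1 : k ≤ Nat.dist x k + x := Nat.dist_tri_left x k
    simp only [map_cons, sum_cons, length_cons]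
    have : (A.length + 1) * k = A.length * k + k := by ring
    omega

private lemma map_dist_eq1 (k : ℕ) {A : List ℕ} (h : ∀ x ∈ A, k ≤ x) :
    (A.map (fun x => Nat.dist x k)).sum + A.length * k = A.sum := by
  induction A with
  | nil => simp
  | cons x A ih =>
    have hx : k ≤ x := h x (mem_cons_self)
    have h1 : Nat.dist x k = x - k := Nat.dist_eq_sub_of_le_right hx
    have h2 := ih (fun y hy => h y (mem_cons_of_mem _ hy))
    simp only [map_cons, sum_cons, length_cons]
    have : (A.length + 1) * k = A.length * k + k := by ring
    omega

private lemma map_dist_eq2 (k : ℕ) {B : List ℕ} (h : ∀ x ∈ B, x ≤ k) :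
    (B.map (fun x => Nat.dist x k)).sum + B.sum = B.length * k := by
  induction B with
  | nil => simp
  | cons x B ih =>
    have hx : x ≤ k := h x (mem_cons_self)
    have h1 : Nat.dist x k = k - x := Nat.dist_eq_sub_of_le hx
    have h2 := ih (fun y hy => h y (mem_cons_of_mem _ hy))
    simp only [map_cons, sum_cons, length_cons]
    have : (B.length + 1) * k = B.length * k + k := by ring
    omega

private lemma opk_length (k : ℕ) (l : List ℕ) : (opk k l).length = l.length := by
  simp [opk, length_insertionSort]

private lemma opk_perm (k : ℕ) (l : List ℕ) : opk k l ~ l.map (fun x => Nat.dist x k) :=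
  perm_insertionSort _ _

private lemma opk_sorted (k : ℕ) (l : List ℕ) : (opk k l).Pairwise (· ≥ ·) :=
  pairwise_insertionSort (r := (· ≥ ·)) _

private lemma lemA {M : List ℕ} (hM : M.Pairwise (· ≥ ·)) (k i : ℕ) :
    ∃ a b : ℕ, a + b ≤ min i M.length ∧
      ((opk k M).take i).sum + a * k + (M.drop (M.length - b)).sum ≤
        (M.take a).sum + b * k := by
  set ws := opk k M with hws
  have hlen : ws.length = M.length := opk_length k M
  set j := min i M.length with hj
  have htake : (ws.take i).sum = (ws.take j).sum := by
    rcases le_total i M.length with h | h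
    · rw [hj, min_eq_left h]
    · rw [take_of_length_le (by omega), take_of_length_le (by omega)]
  set s := ws.take j with hs
  have hslen : s.length = j := by
    rw [hs, length_take, hlen]
    omega
  have hssub : s <+~ M.map (fun x => Nat.dist x k) := ((take_sublist _ _).subperm).trans (opk_perm k M).subperm
  obtain ⟨s', hp, hsub⟩ := hssub
  obtain ⟨t, htsub, hteq⟩ := sublist_map_iff.mp hsub
  set A := t.filter (fun x => decide (k ≤ x)) with hA
  set B := t.filter (fun x => !decide (k ≤ x)) with hB
  have hABperm : A ++ B ~ t := filter_append_perm _ t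
  have hAsub : A <+~ M := ((filter_sublist (l := t)).trans htsub).subperm
  have hBsub : B <+~ M := ((filter_sublist (l := t)).trans htsub).subperm
  have hAtop : A.sum ≤ (M.take A.length).sum := sum_le_take_of_subperm hAsub hM
  have hBbot : (M.drop (M.length - B.length)).sum ≤ B.sum := bot_le_sum_of_subperm hBsub hM
  have hABlen : A.length + B.length = j := by
    have h1 : (A ++ B).length = t.length := hABperm.length_eq
    have h2 : s'.length = t.length := by rw [hteq, length_map]
    have h3 : s'.length = s.length := hp.length_eq
    simp only [length_append] at h1
    omega
  have hsumAB : s.sum = (A.map (fun x => Nat.dist x k)).sum + (B.map (fun x => Nat.dist x k)).sum := by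
    have h1 : s.sum = s'.sum := hp.sum_eq.symm
    have h2 : s'.sum = (t.map (fun x => Nat.dist x k)).sum := by rw [hteq]
    have h3 : (A ++ B).map (fun x => Nat.dist x k) ~ t.map (fun x => Nat.dist x k) := hABperm.map (fun x => Nat.dist x k)
    have h4 := h3.sum_eq
    rw [map_append, sum_append] at h4
    omega
  have hAval : (A.map (fun x => Nat.dist x k)).sum + A.length * k = A.sum :=
    map_dist_eq1 k (by intro x hx; rw [hA, mem_filter] at hx; exact of_decide_eq_true hx.2)
  have hBval : (B.map (fun x => Nat.dist x k)).sum + B.sum = B.length * k := by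
    refine map_dist_eq2 k ?_
    intro x hx
    rw [hB, mem_filter] at hx
    have := hx.2
    simp only [Bool.not_eq_true', decide_eq_false_iff_not, not_le] at this
    omega
  exact ⟨A.length, B.length, by omega, by rw [htake]; omega⟩

private lemma lemB {L : List ℕ} (k a b : ℕ) (hab : a + b ≤ L.length) :
    (L.take a).sum + b * k ≤
      ((opk k L).take (a+b)).sum + a * k + (L.drop (L.length - b)).sum := by
  set A := L.take a with hA
  set B := L.drop (L.length - b) with hB
  have hAlen : A.length = a := by rw [hA, length_take]; omega
  have hBlen : B.length = b := by rw [hB, length_drop]; omega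
  have hsub : A ++ B <+ L := by
    have h1 : A <+ L.take (L.length - b) := by
      have : A = (L.take (L.length - b)).take a := by
        rw [take_take, min_eq_left (show a ≤ L.length - b by omega)]
      rw [this]
      exact take_sublist _ _
    calc A ++ B <+ L.take (L.length - b) ++ B := h1.append (Sublist.refl B)
    _ = L := take_append_drop _ _
  have hmapsub : (A ++ B).map (fun x => Nat.dist x k) <+~ opk k L :=
    ((hsub.map (fun x => Nat.dist x k)).subperm).trans (opk_perm k L).symm.subperm
  have hlen2 : ((A ++ B).map (fun x => Nat.dist x k)).length = a + b := by
    rw [length_map, length_append, hAlen, hBlen]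
  have h1 := sum_le_take_of_subperm hmapsub (opk_sorted k L)
  rw [hlen2] at h1
  have h2 := map_dist_lower1 k A
  have h3 := map_dist_lower2 k B
  have h4 : ((A ++ B).map (fun x => Nat.dist x k)).sum = (A.map (fun x => Nat.dist x k)).sum + (B.map (fun x => Nat.dist x k)).sum := by
    rw [map_append, sum_append]
  rw [hAlen] at h2
  rw [hBlen] at h3
  omega

private lemma opk_dominates {L M : List ℕ} (hL : L.Pairwise (· ≥ ·)) (hM : M.Pairwise (· ≥ ·))
    (hlen : L.length = M.length) (hsum : L.sum = M.sum) (hdom : Dominates L M) (k : ℕ) :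
    Dominates (opk k L) (opk k M) := by
  intro i
  obtain ⟨a, b, hab, hAineq⟩ := lemA hM k i
  have hab' : a + b ≤ L.length := by rw [hlen]; omega
  have hBineq := lemB k a b hab'
  have htop : (M.take a).sum ≤ (L.take a).sum := hdom a
  have hbot : (L.drop (M.length - b)).sum ≤ (M.drop (M.length - b)).sum := by
    have h1 : (L.take (M.length - b)).sum + (L.drop (M.length - b)).sum = L.sum := by
      rw [← sum_append, take_append_drop]
    have h2 : (M.take (M.length - b)).sum + (M.drop (M.length - b)).sum = M.sum := by
      rw [← sum_append, take_append_drop]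
    have h3 := hdom (M.length - b)
    omega
  have hmono : ((opk k L).take (a+b)).sum ≤ ((opk k L).take i).sum :=
    take_sum_mono (by omega)
  rw [hlen] at hBineq
  omega

theorem opk_dominance_of_covers
    (n ℓ : ℕ) (l m : List ℕ)
    (hlsort : l.Pairwise (· ≥ ·)) (hlpos : ∀ x ∈ l, 0 < x) (hlsum : l.sum = n)
    (hmsort : m.Pairwise (· ≥ ·)) (hmpos : ∀ x ∈ m, 0 < x) (hmsum : m.sum = n)
    (hdom : Dominates l m) (hne : l ≠ m)
    (hcov : ∀ ν : List ℕ, ν.Pairwise (· ≥ ·) → (∀ x ∈ ν, 0 < x) → ν.sum = n →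
      Dominates l ν → Dominates ν m → ν = l ∨ ν = m)
    (hllen : l.length ≤ ℓ) (hmlen : m.length ≤ ℓ)
    (k : ℕ) (hk : 0 < k) :
    Dominates (opk k (l ++ List.replicate (ℓ - l.length) 0))
              (opk k (m ++ List.replicate (ℓ - m.length) 0)) := by
  set L := l ++ List.replicate (ℓ - l.length) 0 with hLdef
  set M := m ++ List.replicate (ℓ - m.length) 0 with hMdef
  have hLsort : L.Pairwise (· ≥ ·) := by
    rw [hLdef, pairwise_append]
    refine ⟨hlsort, pairwise_replicate.mpr (Or.inr le_rfl), ?_⟩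
    intro a ha b hb
    rw [eq_of_mem_replicate hb]
    exact Nat.zero_le a
  have hMsort : M.Pairwise (· ≥ ·) := by
    rw [hMdef, pairwise_append]
    refine ⟨hmsort, pairwise_replicate.mpr (Or.inr le_rfl), ?_⟩
    intro a ha b hb
    rw [eq_of_mem_replicate hb]
    exact Nat.zero_le a
  have hlenL : L.length = ℓ := by rw [hLdef, length_append, length_replicate]; omega
  have hlenM : M.length = ℓ := by rw [hMdef, length_append, length_replicate]; omega
  have hsumL : L.sum = n := by rw [hLdef, sum_append, sum_replicate, smul_zero, add_zero, hlsum]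
  have hsumM : M.sum = n := by rw [hMdef, sum_append, sum_replicate, smul_zero, add_zero, hmsum]
  have hdom' : Dominates L M := by
    intro i
    rw [hLdef, hMdef, take_append, take_append,
      sum_append, sum_append, take_replicate, take_replicate, sum_replicate, sum_replicate,
      smul_zero, smul_zero, add_zero, add_zero]
    exact hdom i
  exact opk_dominates hLsort hMsort (by rw [hlenL, hlenM]) (by rw [hsumL, hsumM]) hdom' k
end

section
/- Let μ = (μ_1,…,μ_ℓ) be a non-increasing sequence of non-negative integers, let 1 ≤ i < j ≤ ℓ, and suppose λ defined by λ_i = μ_i + 1, λ_j = μ_j − 1 (with μ_j ≥ 1) and λ_p = μ_p for p ∉ {i,j} is non-increasing. If k is a positive integer with k < μ_j, then λ^(k) dominates μ^(k). -/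
-- helper 1: sorted prefix sums dominate any sub-multiset
lemma aux_sum_take_le (l : List ℕ) (hl : l.Pairwise (· ≥ ·)) :
    ∀ (n : ℕ) (s : Multiset ℕ), s ≤ (l : Multiset ℕ) → Multiset.card s ≤ n →
      s.sum ≤ (l.take n).sum := by
  induction l with
  | nil =>
    intro n s hs _
    simp only [Multiset.coe_nil, Multiset.le_zero] at hs
    simp [hs]
  | cons x t ih =>
    intro n s hs hcard
    by_cases hx : x ∈ s
    · obtain ⟨s', rfl⟩ : ∃ s', s = x ::ₘ s' := ⟨s.erase x, (Multiset.cons_erase hx).symm⟩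
      have hs' : s' ≤ (t : Multiset ℕ) := by
        have h := Multiset.erase_le_erase x hs
        simpa using h
      cases n with
      | zero => simp at hcard
      | succ n =>
        have h1 := ih hl.of_cons n s' hs' (by simpa using hcard)
        simp only [Multiset.sum_cons, List.take_succ_cons, List.sum_cons]
        omega
    · have hs' : s ≤ (t : Multiset ℕ) := by
        rw [Multiset.le_iff_count] at hs ⊢
        intro z
        have := hs z
        rcases eq_or_ne z x with rfl | hzx
        · simp [Multiset.count_eq_zero_of_notMem hx]
        · simpa [Multiset.count_cons, List.count_cons, hzx, hzx.symm] using this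
      cases n with
      | zero =>
        interval_cases h : Multiset.card s
        · simp [Multiset.card_eq_zero.mp h]
      | succ n =>
        have h1 := ih hl.of_cons (n+1) s hs' hcard
        have h2 : ((t.take (n+1)).sum : ℕ) ≤ x + (t.take n).sum := by
          rcases le_or_gt t.length n with hn | hn
          · rw [List.take_of_length_le hn, List.take_of_length_le (by omega)]
            omega
          · rw [List.sum_take_succ _ _ hn]
            have := List.rel_of_pairwise_cons hl (a' := t.get ⟨n, hn⟩) (List.get_mem _ _)
            simp only [List.get_eq_getElem] at this
            omega
        simp only [List.take_succ_cons, List.sum_cons]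
        omega


-- helper 2: sorted list dominates any permutation of itself
lemma aux_dominates_of_perm (l m : List ℕ) (hl : l.Pairwise (· ≥ ·)) (h : List.Perm m l) :
    Dominates l m := by
  intro n
  apply aux_sum_take_le l hl n (↑(m.take n))
  · exact Multiset.coe_le.mpr ((m.take_sublist n).subperm.trans h.subperm)
  · simpa using (m.take_sublist n).length_le

-- helper 3: the shift dominance
lemma aux_shift_inner (B C : List ℕ) (b : ℕ) (hb : 1 ≤ b) :
    ∀ n : ℕ, ((B ++ b :: C).take n).sum ≤ ((B ++ (b-1) :: C).take n).sum + 1 := by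
  induction B with
  | nil =>
    intro n
    cases n with
    | zero => simp
    | succ n => simp only [List.nil_append, List.take_succ_cons, List.sum_cons]; omega
  | cons x B' ih =>
    intro n
    cases n with
    | zero => simp
    | succ n =>
      simp only [List.cons_append, List.take_succ_cons, List.sum_cons]
      have := ih n
      omega

lemma aux_shift (A B C : List ℕ) (a b : ℕ) (hb : 1 ≤ b) :
    Dominates (A ++ (a+1) :: (B ++ (b-1) :: C)) (A ++ a :: (B ++ b :: C)) := by
  induction A with
  | nil =>
    intro n
    cases n with
    | zero => simp
    | succ n =>
      simp only [List.nil_append, List.take_succ_cons, List.sum_cons]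
      have := aux_shift_inner B C b hb n
      omega
  | cons x A' ih =>
    intro n
    cases n with
    | zero => simp
    | succ n =>
      simp only [List.cons_append, List.take_succ_cons, List.sum_cons]
      have := ih n
      omega

-- helper 4: split a sorted list at two elements
lemma aux_split (m : List ℕ) (hm : m.Pairwise (· ≥ ·)) (a b : ℕ) (hab : b ≤ a)
    (h : (a ::ₘ {b} : Multiset ℕ) ≤ (m : Multiset ℕ)) :
    ∃ A B C, m = A ++ a :: (B ++ b :: C) := by
  have ha : a ∈ m := by
    have : a ∈ (m : Multiset ℕ) := Multiset.mem_of_le h (by simp)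
    simpa using this
  obtain ⟨A, A', rfl⟩ := List.append_of_mem ha
  have hb : b ∈ (((A ++ a :: A') : List ℕ) : Multiset ℕ).erase a := by
    have h2 := Multiset.erase_le_erase a h
    simp only [Multiset.erase_cons_head] at h2
    exact Multiset.mem_of_le h2 (by simp)
  have hb' : b ∈ A ++ A' := by
    have : ((A ++ a :: A' : List ℕ) : Multiset ℕ) = a ::ₘ (↑(A ++ A') : Multiset ℕ) := by
      simp [Multiset.cons_coe]
    rw [this, Multiset.erase_cons_head] at hb
    simpa using hb
  rcases List.mem_append.mp hb' with hbA | hbA'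
  · -- b ∈ A ; then b = a since elements of A are ≥ a and a ≥ b
    have hge : a ≤ b := by
      have hp := (List.pairwise_append.mp (by simpa [] using hm)).2.2
      exact hp b hbA a (by simp)
    have : b = a := le_antisymm hab hge
    subst this
    obtain ⟨A1, A2, rfl⟩ := List.append_of_mem hbA
    exact ⟨A1, A2, A', by simp⟩
  · obtain ⟨B, C, rfl⟩ := List.append_of_mem hbA'
    exact ⟨A, B, C, by simp⟩

lemma aux_set_append (P T : List ℕ) (x v : ℕ) :
    (P ++ x :: T).set P.length v = P ++ v :: T := by
  induction P with
  | nil => simp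
  | cons y P' ih => simp [ih]

theorem opk_dominance_case_k_lt
    (μ : List ℕ) (hμsort : μ.Pairwise (· ≥ ·))
    (i j : ℕ) (hij : i < j) (hj : j < μ.length)
    (hpos : 1 ≤ μ.getD j 0)
    (lam : List ℕ)
    (hlam : lam = (μ.set i (μ.getD i 0 + 1)).set j (μ.getD j 0 - 1))
    (hlamsort : lam.Pairwise (· ≥ ·))
    (k : ℕ) (hk : 0 < k) (hkμ : k < μ.getD j 0) :
    Dominates (opk k lam) (opk k μ) := by
  subst hlam
  have hi : i < μ.length := hij.trans hj
  set f : ℕ → ℕ := fun x => Nat.dist x k with hf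
  have hgi : μ.getD i 0 = μ[i] := List.getD_eq_getElem μ 0 hi
  have hgj : μ.getD j 0 = μ[j] := List.getD_eq_getElem μ 0 hj
  rw [hgi] at hlamsort ⊢
  rw [hgj] at hpos hkμ hlamsort ⊢
  set vi := μ[i] with hvi
  set vj := μ[j] with hvj
  have hji : vj ≤ vi := by
    have := hμsort.rel_get_of_lt (a := ⟨i, hi⟩) (b := ⟨j, hj⟩) (by simpa using hij)
    simpa [hvi, hvj] using this
  -- decomposition of μ
  set P := μ.take i with hP
  set Q := (μ.drop (i+1)).take (j-i-1) with hQ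
  set R := μ.drop (j+1) with hR
  have hPlen : P.length = i := by simp [hP]; omega
  have hQlen : Q.length = j - i - 1 := by simp [hQ]; omega
  have e1 : (μ.drop (i+1)).drop (j-i-1) = μ.drop j := by
    rw [List.drop_drop]; congr 1; omega
  have e2 : μ.drop j = vj :: R := List.drop_eq_getElem_cons hj
  have hdec2 : μ.drop (i+1) = Q ++ vj :: R := by
    conv_lhs => rw [← List.take_append_drop (j-i-1) (μ.drop (i+1))]
    rw [e1, e2, hQ]
  have hdec : μ = P ++ vi :: (Q ++ vj :: R) := by
    conv_lhs => rw [← List.take_append_drop i μ, List.drop_eq_getElem_cons hi]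
    rw [hdec2, hP, hvi]
  -- decomposition of lam
  have hlamdec : (μ.set i (vi+1)).set j (vj-1) = P ++ (vi+1) :: (Q ++ (vj-1) :: R) := by
    have s1 : μ.set i (vi+1) = P ++ (vi+1) :: (Q ++ vj :: R) := by
      conv_lhs => rw [hdec, ← hPlen]
      exact aux_set_append P (Q ++ vj :: R) vi (vi+1)
    rw [s1]
    have hre : P ++ (vi+1) :: (Q ++ vj :: R) = (P ++ (vi+1) :: Q) ++ vj :: R := by simp
    have hlen : (P ++ (vi+1) :: Q).length = j := by simp [hPlen, hQlen]; omega
    rw [hre, ← hlen, aux_set_append]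
    simp
  -- mapped decompositions
  have hkvj : k < vj := hkμ
  have hkvi : k ≤ vi := le_trans (le_of_lt hkvj) hji
  set a := vi - k with ha
  set b := vj - k with hb
  have hb1 : 1 ≤ b := by omega
  have hfvi : f vi = a := Nat.dist_eq_sub_of_le_right hkvi
  have hfvi1 : f (vi+1) = a + 1 := by
    rw [hf]; simp only []
    rw [Nat.dist_eq_sub_of_le_right (by omega)]; omega
  have hfvj : f vj = b := Nat.dist_eq_sub_of_le_right (le_of_lt hkvj)
  have hfvj1 : f (vj-1) = b - 1 := by
    rw [hf]; simp only []
    rw [Nat.dist_eq_sub_of_le_right (by omega)]; omega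
  have hfμ : μ.map f = P.map f ++ a :: (Q.map f ++ b :: R.map f) := by
    conv_lhs => rw [hdec]
    simp [hfvi, hfvj]
  have hflam : ((μ.set i (vi+1)).set j (vj-1)).map f
      = P.map f ++ (a+1) :: (Q.map f ++ (b-1) :: R.map f) := by
    rw [hlamdec]
    simp [hfvi1, hfvj1]
  -- the sorted list m₀ = opk k μ
  set m₀ := opk k μ with hm₀
  have hm₀sort : m₀.Pairwise (· ≥ ·) := List.pairwise_insertionSort _ _
  have hm₀perm : List.Perm m₀ (μ.map f) := List.perm_insertionSort _ _
  have hm₀coe : (m₀ : Multiset ℕ) = (↑(μ.map f) : Multiset ℕ) :=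
    Multiset.coe_eq_coe.mpr hm₀perm
  -- {a, b} ≤ m₀
  have hsub : (a ::ₘ {b} : Multiset ℕ) ≤ (m₀ : Multiset ℕ) := by
    rw [hm₀coe, hfμ]
    have hsl : List.Sublist [a, b] (P.map f ++ a :: (Q.map f ++ b :: R.map f)) := by
      apply List.sublist_append_of_sublist_right
      apply List.Sublist.cons₂
      apply List.sublist_append_of_sublist_right
      exact List.Sublist.cons₂ _ (List.nil_sublist _)
    have := hsl.subperm
    rw [← Multiset.coe_le] at this
    rw [show (a ::ₘ {b} : Multiset ℕ) = ↑[a, b] from rfl]; exact this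
  obtain ⟨A, B, C, hm0⟩ := aux_split m₀ hm₀sort a b (by omega) hsub
  -- the intermediate list L
  set L := A ++ (a+1) :: (B ++ (b-1) :: C) with hL
  have dom1 : Dominates L m₀ := by
    rw [hm0]; exact aux_shift A B C a b hb1
  -- multiset bookkeeping
  have hmeq : ((↑A + ↑B + ↑C : Multiset ℕ)) = ↑(P.map f) + ↑(Q.map f) + ↑(R.map f) := by
    have h1 : (↑A + ({a} + (↑B + ({b} + ↑C))) : Multiset ℕ)
        = ↑(P.map f) + ({a} + (↑(Q.map f) + ({b} + ↑(R.map f)))) := by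
      have := hm₀coe
      rw [hm0, hfμ] at this
      simp only [← Multiset.cons_coe, ← Multiset.coe_add, ← Multiset.singleton_add] at this
      exact this
    have h2 : ({a} + {b} + (↑A + ↑B + ↑C) : Multiset ℕ)
        = {a} + {b} + (↑(P.map f) + ↑(Q.map f) + ↑(R.map f)) := by
      calc ({a} + {b} + (↑A + ↑B + ↑C) : Multiset ℕ)
          = ↑A + ({a} + (↑B + ({b} + ↑C))) := by abel
        _ = ↑(P.map f) + ({a} + (↑(Q.map f) + ({b} + ↑(R.map f)))) := h1
        _ = {a} + {b} + (↑(P.map f) + ↑(Q.map f) + ↑(R.map f)) := by abel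
    exact add_left_cancel h2
  have hLcoe : (L : Multiset ℕ) = (↑(((μ.set i (vi+1)).set j (vj-1)).map f) : Multiset ℕ) := by
    rw [hL, hflam]
    calc (↑(A ++ (a+1) :: (B ++ (b-1) :: C)) : Multiset ℕ)
        = {a+1} + {b-1} + (↑A + ↑B + ↑C) := by
          simp only [← Multiset.cons_coe, ← Multiset.coe_add, ← Multiset.singleton_add]
          abel
      _ = {a+1} + {b-1} + (↑(P.map f) + ↑(Q.map f) + ↑(R.map f)) := by rw [hmeq]
      _ = ↑(P.map f ++ (a+1) :: (Q.map f ++ (b-1) :: R.map f)) := by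
          simp only [← Multiset.cons_coe, ← Multiset.coe_add, ← Multiset.singleton_add]
          abel
  have hopksort : (opk k ((μ.set i (vi+1)).set j (vj-1))).Pairwise (· ≥ ·) :=
    List.pairwise_insertionSort _ _
  have hopkperm : List.Perm L (opk k ((μ.set i (vi+1)).set j (vj-1))) := by
    rw [← Multiset.coe_eq_coe, hLcoe]
    exact (Multiset.coe_eq_coe.mpr (List.perm_insertionSort _ _)).symm
  have dom2 : Dominates (opk k ((μ.set i (vi+1)).set j (vj-1))) L :=
    aux_dominates_of_perm _ _ hopksort hopkperm
  intro n
  exact le_trans (dom1 n) (dom2 n)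
end

section
/- Let μ = (μ_1,…,μ_ℓ) be a non-increasing sequence of non-negative integers, let 1 ≤ i < j ≤ ℓ, and suppose λ defined by λ_i = μ_i + 1, λ_j = μ_j − 1 (with μ_j ≥ 1) and λ_p = μ_p for p ∉ {i,j} is non-increasing. If k is a positive integer with k = μ_j < μ_i, then λ^(k) dominates μ^(k); moreover λ^(k) is obtained from μ^(k) by replacing the first occurrence of μ_i − k by μ_i − k + 1 and the first occurrence of 0 by 1, and re-sorting in non-increasing order. -/
private lemma getD_eq' {l : List ℕ} {n : ℕ} (hn : n < l.length) : l.getD n 0 = l[n] := by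
  simp [List.getD_eq_getElem?_getD, List.getElem?_eq_getElem hn]

private lemma replace_cons_ne {x a b : ℕ} (h : x ≠ a) (t : List ℕ) :
    (x :: t).replace a b = x :: t.replace a b := by
  rw [List.replace_cons, beq_false_of_ne (Ne.symm h)]

private lemma dom_refl (l : List ℕ) : Dominates l l := fun _ => le_rfl

private lemma dom_cons {x y : ℕ} {l m : List ℕ} (hxy : y ≤ x) (h : Dominates l m) :
    Dominates (x :: l) (y :: m) := by
  intro n
  cases n with
  | zero => simp
  | succ n =>
    simp only [List.take_succ_cons, List.sum_cons]
    exact Nat.add_le_add hxy (h n)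

private lemma dom_replace {a b : ℕ} (hab : a ≤ b) : ∀ m : List ℕ, Dominates (m.replace a b) m
  | [] => dom_refl []
  | x :: t => by
    by_cases hx : x = a
    · subst hx
      rw [List.replace_cons_self]
      exact dom_cons hab (dom_refl t)
    · rw [replace_cons_ne hx]
      exact dom_cons le_rfl (dom_replace hab t)

private lemma mem_replace' {y a b : ℕ} : ∀ {l : List ℕ}, y ∈ l.replace a b → y = b ∨ y ∈ l
  | [], h => by simp at h
  | x :: t, h => by
    by_cases hx : x = a
    · subst hx
      rw [List.replace_cons_self] at h
      rcases List.mem_cons.1 h with h | h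
      · exact Or.inl h
      · exact Or.inr (List.mem_cons_of_mem _ h)
    · rw [replace_cons_ne hx] at h
      rcases List.mem_cons.1 h with h | h
      · exact Or.inr (h ▸ List.mem_cons_self)
      · rcases mem_replace' h with h | h
        · exact Or.inl h
        · exact Or.inr (List.mem_cons_of_mem _ h)

private lemma sorted_replace (a : ℕ) : ∀ {m : List ℕ}, m.Pairwise (· ≥ ·) →
    (m.replace a (a + 1)).Pairwise (· ≥ ·)
  | [], _ => by simp
  | x :: t, h => by
    rw [List.pairwise_cons] at h
    by_cases hx : x = a
    · subst hx
      rw [List.replace_cons_self, List.pairwise_cons]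
      refine ⟨fun y hy => ?_, h.2⟩
      have := h.1 y hy
      omega
    · rw [replace_cons_ne hx, List.pairwise_cons]
      refine ⟨fun y hy => ?_, sorted_replace a h.2⟩
      by_cases ha : a ∈ t
      · rcases mem_replace' hy with rfl | hy
        · have := h.1 a ha; omega
        · exact h.1 y hy
      · rw [List.replace_of_not_mem (by simpa using ha)] at hy
        exact h.1 y hy

private lemma perm_set (l : List ℕ) {n : ℕ} (hn : n < l.length) (b : ℕ) :
    (l.getD n 0 :: l.set n b).Perm (b :: l) := by
  have h1 : l.getD n 0 :: l.set n b = l[n] :: (l.take n ++ b :: l.drop (n + 1)) := by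
    rw [getD_eq' hn, List.set_eq_take_cons_drop b hn]
  have h5 : l.take n ++ l[n] :: l.drop (n + 1) = l := by
    rw [← List.drop_eq_getElem_cons hn, List.take_append_drop]
  rw [h1]
  exact (((List.perm_middle.cons _).trans (List.Perm.swap _ _ _)).trans
    (List.perm_middle.symm.cons _)).trans (List.Perm.of_eq (by rw [h5]))

private lemma perm_replace' {a b : ℕ} : ∀ {l : List ℕ}, a ∈ l →
    (a :: l.replace a b).Perm (b :: l)
  | x :: t, h => by
    by_cases hx : x = a
    · subst hx
      rw [List.replace_cons_self]
      exact List.Perm.swap _ _ _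
    · rw [replace_cons_ne hx]
      have ht : a ∈ t := by
        rcases List.mem_cons.1 h with h | h
        · exact absurd h.symm hx
        · exact h
      exact ((List.Perm.swap _ _ _).trans ((perm_replace' ht).cons _)).trans
        (List.Perm.swap _ _ _)

theorem opk_dominance_case_k_eq_muj
    (μ : List ℕ) (hμsort : μ.Pairwise (· ≥ ·))
    (i j : ℕ) (hij : i < j) (hj : j < μ.length)
    (hpos : 1 ≤ μ.getD j 0)
    (lam : List ℕ)
    (hlam : lam = (μ.set i (μ.getD i 0 + 1)).set j (μ.getD j 0 - 1))
    (hlamsort : lam.Pairwise (· ≥ ·))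
    (k : ℕ) (hk : 0 < k) (hkj : k = μ.getD j 0) (hki : k < μ.getD i 0) :
    Dominates (opk k lam) (opk k μ) ∧
      opk k lam
        = ((((opk k μ).replace (μ.getD i 0 - k) (μ.getD i 0 - k + 1)).replace 0 1).insertionSort
            (· ≥ ·)) := by
  have hi : i < μ.length := hij.trans hj
  set f : ℕ → ℕ := fun x => Nat.dist x k with hf
  set a := μ.getD i 0 with ha
  set c := a - k with hc
  set ν : List ℕ := μ.map f with hν
  have hνlen : ν.length = μ.length := by simp [hν]
  have hiν : i < ν.length := by rw [hνlen]; exact hi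
  have hjν : j < ν.length := by rw [hνlen]; exact hj
  -- values of ν at i and j
  have hμi : μ[i] = a := by rw [ha, getD_eq' hi]
  have hμj : μ[j] = k := by rw [hkj, getD_eq' hj]
  have hνi : ν.getD i 0 = c := by
    rw [getD_eq' hiν]
    simp only [hν, List.getElem_map, hμi, hf, Nat.dist]
    omega
  have hνj : ν.getD j 0 = 0 := by
    rw [getD_eq' hjν]
    simp only [hν, List.getElem_map, hμj, hf, Nat.dist]
    omega
  -- lam.map f
  have hmap : lam.map f = (ν.set i (c + 1)).set j 1 := by
    rw [hlam, List.map_set, List.map_set]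
    have h1 : f (a + 1) = c + 1 := by simp only [hf, Nat.dist]; omega
    have h2 : f (μ.getD j 0 - 1) = 1 := by
      simp only [hf, ← hkj, Nat.dist]; omega
    rw [h1, h2, ← hν]
  set ν₁ : List ℕ := ν.set i (c + 1) with hν₁
  have hjν₁ : j < ν₁.length := by simpa [hν₁] using hjν
  have hν₁j : ν₁.getD j 0 = 0 := by
    simp only [hν₁, List.getD_eq_getElem?_getD, List.getElem?_set_ne (Nat.ne_of_lt hij)]
    rw [← List.getD_eq_getElem?_getD, hνj]
  set s : List ℕ := opk k μ with hs'
  have hs : s.Perm ν := List.perm_insertionSort _ _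
  have hssort : s.Pairwise (· ≥ ·) := List.pairwise_insertionSort _ _
  have hcν : c ∈ ν := by rw [← hνi, getD_eq' hiν]; exact List.getElem_mem _
  have hcs : c ∈ s := hs.mem_iff.2 hcν
  set s₁ : List ℕ := s.replace c (c + 1) with hs₁
  have permB : (c :: ν₁).Perm ((c + 1) :: ν) := by
    have := perm_set ν hiν (c + 1); rwa [hνi] at this
  have permD : (c :: s₁).Perm ((c + 1) :: s) := perm_replace' hcs
  have hν₁s₁ : ν₁.Perm s₁ :=
    List.Perm.cons_inv ((permB.trans ((hs.symm).cons (c + 1))).trans permD.symm)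
  have h0ν₁ : (0 : ℕ) ∈ ν₁ := by rw [← hν₁j, getD_eq' hjν₁]; exact List.getElem_mem _
  have h0s₁ : (0 : ℕ) ∈ s₁ := hν₁s₁.mem_iff.1 h0ν₁
  have permA : ((0 : ℕ) :: ν₁.set j 1).Perm (1 :: ν₁) := by
    have := perm_set ν₁ hjν₁ 1; rwa [hν₁j] at this
  have permC : ((0 : ℕ) :: s₁.replace 0 1).Perm (1 :: s₁) := perm_replace' h0s₁
  have keyperm : (lam.map f).Perm (s₁.replace 0 1) := by
    rw [hmap]
    exact List.Perm.cons_inv ((permA.trans (hν₁s₁.cons 1)).trans permC.symm)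
  have hcc : μ.getD i 0 - k = c := rfl
  -- sortedness of R
  have hs₁sort : s₁.Pairwise (· ≥ ·) := sorted_replace c hssort
  have hRsort : (s₁.replace 0 1).Pairwise (· ≥ ·) := sorted_replace 0 hs₁sort
  have heq : opk k lam
      = (((s.replace (μ.getD i 0 - k) (μ.getD i 0 - k + 1)).replace 0 1).insertionSort (· ≥ ·)) := by
    refine List.Perm.eq_of_pairwise' (List.pairwise_insertionSort _ _) (List.pairwise_insertionSort _ _) ?_
    rw [hcc, ← hs₁]
    exact ((List.perm_insertionSort _ _).trans keyperm).trans (List.perm_insertionSort _ _).symm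
  refine ⟨?_, heq⟩
  rw [heq, hcc, ← hs₁, hRsort.insertionSort_eq]
  exact fun n => le_trans ((dom_replace (Nat.le_succ c) s) n) ((dom_replace (Nat.zero_le 1) s₁) n)
end

section
/- Let μ = (μ_1,…,μ_ℓ) be a non-increasing sequence of non-negative integers, let 1 ≤ i < j ≤ ℓ, and suppose λ defined by λ_i = μ_i + 1, λ_j = μ_j − 1 (with μ_j ≥ 1) and λ_p = μ_p for p ∉ {i,j} is non-increasing. If k is a positive integer with k = μ_j = μ_i, then the multiset {|λ_p − k|} is obtained from the multiset {|μ_p − k|} by replacing two copies of 0 by two copies of 1; in particular λ^(k) dominates μ^(k). -/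
lemma take_sum (l : List ℕ) : ∀ i : ℕ, (l.take i).sum = ∑ n ∈ Finset.range i, l.getD n 0 := by
  induction l with
  | nil => intro i; simp
  | cons a l ih =>
    intro i
    cases i with
    | zero => simp
    | succ m =>
      rw [List.take_succ_cons, List.sum_cons, ih m, Finset.sum_range_succ']
      simp [Nat.add_comm]

lemma sorted_getD (l : List ℕ) (hl : l.Pairwise (· ≥ ·)) (n t : ℕ) :
    t + 1 ≤ l.getD n 0 ↔ n < l.countP (fun x => t + 1 ≤ x) := by
  induction l generalizing n with
  | nil => simp
  | cons a l ih =>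
    have hle : ∀ b ∈ l, b ≤ a := fun b hb => (List.pairwise_cons.mp hl).1 b hb
    have hsl : l.Pairwise (· ≥ ·) := (List.pairwise_cons.mp hl).2
    by_cases ha : t + 1 ≤ a
    · have hc : (a :: l).countP (fun x => t + 1 ≤ x) = l.countP (fun x => t + 1 ≤ x) + 1 := by
        simp [List.countP_cons, show t < a by omega]
      cases n with
      | zero => rw [List.getD_cons_zero, hc]; simp [ha]
      | succ m => rw [List.getD_cons_succ, ih hsl, hc]; omega
    · have hz : (a :: l).countP (fun x => t + 1 ≤ x) = 0 := by
        rw [List.countP_eq_zero]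
        intro b hb
        rcases List.mem_cons.mp hb with rfl | hb
        · simpa using ha
        · have := hle b hb; simp; omega
      rw [hz]
      cases n with
      | zero => simpa using ha
      | succ m =>
        rw [List.getD_cons_succ]
        simp only [Nat.not_lt_zero, iff_false]
        by_cases hm : m < l.length
        · have := hle _ (List.getElem_mem hm)
          rw [List.getD_eq_getElem _ _ hm]; omega
        · rw [List.getD_eq_default _ _ (by omega)]; omega

lemma multiset_set (l : List ℕ) (n v : ℕ) (h : n < l.length) :
    (↑(l.set n v) : Multiset ℕ) + {l[n]} = ↑l + {v} := by
  rw [List.set_eq_take_cons_drop v h]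
  conv_rhs => rw [← List.take_append_drop n l, List.drop_eq_getElem_cons h]
  simp only [← Multiset.coe_add, ← Multiset.cons_coe]
  rw [← Multiset.singleton_add v, ← Multiset.singleton_add (l[n])]
  abel

theorem opk_dominance_case_k_eq_mui_eq_muj
    (μ : List ℕ) (hμsort : μ.Pairwise (· ≥ ·))
    (i j : ℕ) (hij : i < j) (hj : j < μ.length)
    (hpos : 1 ≤ μ.getD j 0)
    (lam : List ℕ)
    (hlam : lam = (μ.set i (μ.getD i 0 + 1)).set j (μ.getD j 0 - 1))
    (hlamsort : lam.Pairwise (· ≥ ·))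
    (k : ℕ) (hk : 0 < k) (hkj : k = μ.getD j 0) (hki : k = μ.getD i 0) :
    (↑(lam.map (fun x => Nat.dist x k)) : Multiset ℕ)
        = ((↑(μ.map (fun x => Nat.dist x k)) : Multiset ℕ).erase 0).erase 0 + {1, 1} ∧
      Dominates (opk k lam) (opk k μ) := by
  have hi : i < μ.length := hij.trans hj
  set f : ℕ → ℕ := fun x => Nat.dist x k with hf
  have hμi : μ[i] = k := by rw [hki, List.getD_eq_getElem _ _ hi]
  have hμj : μ[j] = k := by rw [hkj, List.getD_eq_getElem _ _ hj]
  have h1 : f (μ.getD i 0 + 1) = 1 := by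
    rw [← hki]; simp only [hf, Nat.dist]; omega
  have h2 : f (μ.getD j 0 - 1) = 1 := by
    rw [← hkj]; simp only [hf, Nat.dist]; omega
  set T := μ.map f with hT
  have hTlen : T.length = μ.length := List.length_map _
  have hmap : lam.map f = (T.set i 1).set j 1 := by
    rw [hlam, List.map_set, List.map_set, h1, h2, hT]
  have hTi : T[i]'(by omega) = 0 := by
    simp only [hT, List.getElem_map, hμi, hf]; exact Nat.dist_self k
  have hTj : T[j]'(by omega) = 0 := by
    simp only [hT, List.getElem_map, hμj, hf]; exact Nat.dist_self k
  have hstep1 : (↑((T.set i 1).set j 1) : Multiset ℕ) + {0} = ↑(T.set i 1) + {1} := by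
    have h := multiset_set (T.set i 1) j 1 (by rw [List.length_set]; omega)
    rwa [List.getElem_set_ne (by omega), hTj] at h
  have hstep2 : (↑(T.set i 1) : Multiset ℕ) + {0} = ↑T + {1} := by
    have h := multiset_set T i 1 (by omega)
    rwa [hTi] at h
  have hAB : (↑(lam.map f) : Multiset ℕ) + {0} + {0} = ↑T + {1} + {1} := by
    rw [hmap, hstep1, add_right_comm, hstep2, add_right_comm]
  -- two zeros in T
  have h2c : 2 ≤ T.count 0 := by
    have hdecomp : T = T.take j ++ 0 :: T.drop (j + 1) := by
      conv_lhs => rw [← List.take_append_drop j T,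
        List.drop_eq_getElem_cons (by omega : j < T.length), hTj]
    have hmem : (0 : ℕ) ∈ T.take j := by
      have hlt : i < (T.take j).length := by rw [List.length_take]; omega
      have hgt : (T.take j)[i]'hlt = T[i]'(by omega) := List.getElem_take
      have := List.getElem_mem hlt
      rwa [hgt, hTi] at this
    have hcnt : 1 ≤ (T.take j).count 0 := List.count_pos_iff.mpr hmem
    conv_rhs => rw [hdecomp]
    rw [List.count_append, List.count_cons_self]
    omega
  have hmem0 : (0 : ℕ) ∈ (↑T : Multiset ℕ) := by
    rw [← Multiset.count_pos, Multiset.coe_count]; omega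
  have hmem0' : (0 : ℕ) ∈ (↑T : Multiset ℕ).erase 0 := by
    rw [← Multiset.count_pos, Multiset.count_erase_self, Multiset.coe_count]; omega
  have hB : 0 ::ₘ 0 ::ₘ ((↑T : Multiset ℕ).erase 0).erase 0 = ↑T := by
    rw [Multiset.cons_erase hmem0', Multiset.cons_erase hmem0]
  set C := ((↑T : Multiset ℕ).erase 0).erase 0 with hC
  have hpart1 : (↑(lam.map f) : Multiset ℕ) = C + {1, 1} := by
    have key : (↑(lam.map f) : Multiset ℕ) + ({0} + {0}) = (C + {1, 1}) + ({0} + {0}) := by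
      calc (↑(lam.map f) : Multiset ℕ) + ({0} + {0})
          = ↑(lam.map f) + {0} + {0} := by rw [add_assoc]
        _ = ↑T + {1} + {1} := hAB
        _ = (0 ::ₘ 0 ::ₘ C) + {1} + {1} := by rw [hB]
        _ = (C + {1, 1}) + ({0} + {0}) := by
            simp only [Multiset.insert_eq_cons, ← Multiset.singleton_add]; abel
    exact add_right_cancel key
  have hsortA : (opk k lam).Pairwise (· ≥ ·) := by
    unfold opk; exact List.pairwise_insertionSort _ _
  have hsortM : (opk k μ).Pairwise (· ≥ ·) := by
    unfold opk; exact List.pairwise_insertionSort _ _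
  have hpermA : (opk k lam).Perm (lam.map f) := by unfold opk; exact List.perm_insertionSort _ _
  have hpermM : (opk k μ).Perm (μ.map f) := by unfold opk; exact List.perm_insertionSort _ _
  have hptwise : ∀ n : ℕ, (opk k μ).getD n 0 ≤ (opk k lam).getD n 0 := by
    intro n
    cases h : (opk k μ).getD n 0 with
    | zero => exact Nat.zero_le _
    | succ t =>
      have h1' : n < (opk k μ).countP (fun x => t + 1 ≤ x) :=
        (sorted_getD _ hsortM n t).mp (le_of_eq h.symm)
      have e1 : (opk k μ).countP (fun x => decide (t + 1 ≤ x)) =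
          (↑T : Multiset ℕ).countP (fun x => t + 1 ≤ x) := by
        rw [Multiset.coe_countP, hpermM.countP_eq]
      have e2 : (↑(lam.map f) : Multiset ℕ).countP (fun x => t + 1 ≤ x) =
          (opk k lam).countP (fun x => decide (t + 1 ≤ x)) := by
        rw [Multiset.coe_countP, hpermA.countP_eq]
      have hle : (↑T : Multiset ℕ).countP (fun x => t + 1 ≤ x) ≤
          (↑(lam.map f) : Multiset ℕ).countP (fun x => t + 1 ≤ x) := by
        rw [hpart1, ← hB]
        simp only [Multiset.countP_cons, Multiset.countP_add]
        simp
      exact (sorted_getD _ hsortA n t).mpr ((e1 ▸ h1').trans_le (hle.trans_eq e2))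
  refine ⟨hpart1, ?_⟩
  intro q
  rw [take_sum, take_sum]
  exact Finset.sum_le_sum fun n _ => hptwise n
end

section
/- Let μ = (μ_1,…,μ_ℓ) be a non-increasing sequence of non-negative integers, let 1 ≤ i < j ≤ ℓ, and suppose λ defined by λ_i = μ_i + 1, λ_j = μ_j − 1 (with μ_j ≥ 1) and λ_p = μ_p for p ∉ {i,j} is non-increasing. If k is a positive integer with μ_j < k ≤ μ_i, then λ^(k) dominates μ^(k). -/
open List in
private lemma aux_take_le (a : ℕ) :
    ∀ (L : List ℕ) (n : ℕ), (∀ b ∈ L, b ≤ a) → (L.take (n+1)).sum ≤ a + (L.take n).sum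
  | [], n, _ => by simp
  | x :: L', 0, h => by simpa using h x (by simp)
  | x :: L', (p+1), h => by
      have := aux_take_le a L' p (fun b hb => h b (List.mem_cons_of_mem _ hb))
      simp only [List.take_succ_cons, List.sum_cons]
      omega

open List in
private lemma sum_sublist_le_sum_take {L M : List ℕ} (h : M <+ L) (hL : L.Pairwise (· ≥ ·)) :
    M.sum ≤ (L.take M.length).sum := by
  induction h with
  | slnil => simp
  | @cons M' L' a h ih =>
      rcases List.pairwise_cons.mp hL with ⟨ha, hL'⟩
      have h1 := ih hL'
      rcases Nat.eq_zero_or_pos M'.length with h0 | h0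
      · simp [List.length_eq_zero_iff.mp h0]
      · have h2 := aux_take_le a L' ((M'.length) - 1) ha
        have he : M'.length - 1 + 1 = M'.length := by omega
        rw [he] at h2
        calc M'.sum ≤ (L'.take M'.length).sum := h1
          _ ≤ a + (L'.take (M'.length - 1)).sum := h2
          _ = ((a :: L').take M'.length).sum := by
              cases M' with
              | nil => simp at h0
              | cons c M'' => simp
  | @cons_cons M' L' a h ih =>
      rcases List.pairwise_cons.mp hL with ⟨_, hL'⟩
      have := ih hL'
      simp only [List.length_cons, List.take_succ_cons, List.sum_cons]
      omega

open List in
private lemma forall₂_sublist {r : ℕ → ℕ → Prop} :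
    ∀ {A B A' : List ℕ}, List.Forall₂ r A B → A' <+ A →
      ∃ B', B' <+ B ∧ List.Forall₂ r A' B' := by
  intro A B A' h
  induction h generalizing A' with
  | nil => intro hs; exact ⟨[], List.nil_sublist _, by simpa [List.sublist_nil.mp hs]⟩
  | cons hab htail ih =>
      rename_i a b A₀ B₀
      intro hs
      cases hs with
      | cons _ hs' =>
          obtain ⟨B', hB', hf⟩ := ih hs'
          exact ⟨B', hB'.cons _, hf⟩
      | cons_cons _ hs' =>
          obtain ⟨B', hB', hf⟩ := ih hs'
          exact ⟨b :: B', hB'.cons_cons _, List.Forall₂.cons hab hf⟩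

open List in
private lemma dominates_sort_of_forall₂ {A B : List ℕ}
    (h : List.Forall₂ (· ≤ ·) A B) :
    Dominates (B.insertionSort (· ≥ ·)) (A.insertionSort (· ≥ ·)) := by
  intro t
  set sA := A.insertionSort (· ≥ ·) with hsA
  set sB := B.insertionSort (· ≥ ·) with hsB
  have hpermA : sA ~ A := List.perm_insertionSort _ _
  have hpermB : sB ~ B := List.perm_insertionSort _ _
  have hsortB : sB.Pairwise (· ≥ ·) := List.pairwise_insertionSort _ _
  have hsub : sA.take t <+~ A := ((List.take_sublist t sA).subperm).trans hpermA.subperm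
  obtain ⟨A', hA'perm, hA'sub⟩ := hsub
  obtain ⟨B', hB'sub, hf⟩ := forall₂_sublist h hA'sub
  have h1 : (sA.take t).sum = A'.sum := hA'perm.sum_eq.symm
  have h2 : A'.sum ≤ B'.sum := List.Forall₂.sum_le_sum hf
  have hsubB : B' <+~ sB := (hB'sub.subperm).trans hpermB.symm.subperm
  obtain ⟨B'', hB''perm, hB''sub⟩ := hsubB
  have h3 : B''.sum ≤ (sB.take B''.length).sum := sum_sublist_le_sum_take hB''sub hsortB
  have hlen : B''.length ≤ t := by
    have e1 : B''.length = B'.length := hB''perm.length_eq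
    have e2 : B'.length = A'.length := hf.length_eq.symm
    have e3 : A'.length = (sA.take t).length := hA'perm.length_eq
    rw [e1, e2, e3]
    simp [List.length_take]
  have h4 : (sB.take B''.length).sum ≤ (sB.take t).sum := by
    have hst : sB.take B''.length <+ sB.take t := by
      rw [show sB.take B''.length = (sB.take t).take B''.length by
        rw [List.take_take, Nat.min_eq_left hlen]]
      exact List.take_sublist _ _
    exact hst.sum_le_sum (fun a _ => Nat.zero_le a)
  calc (sA.take t).sum = A'.sum := h1
    _ ≤ B'.sum := h2
    _ = B''.sum := hB''perm.sum_eq.symm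
    _ ≤ (sB.take B''.length).sum := h3
    _ ≤ (sB.take t).sum := h4

theorem opk_dominance_case_between
    (μ : List ℕ) (hμsort : μ.Pairwise (· ≥ ·))
    (i j : ℕ) (hij : i < j) (hj : j < μ.length)
    (hpos : 1 ≤ μ.getD j 0)
    (lam : List ℕ)
    (hlam : lam = (μ.set i (μ.getD i 0 + 1)).set j (μ.getD j 0 - 1))
    (hlamsort : lam.Pairwise (· ≥ ·))
    (k : ℕ) (hk : 0 < k) (hkj : μ.getD j 0 < k) (hki : k ≤ μ.getD i 0) :
    Dominates (opk k lam) (opk k μ) := by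
  have hi : i < μ.length := hij.trans hj
  have hgi : μ.getD i 0 = μ[i] := List.getD_eq_getElem μ 0 hi
  have hgj : μ.getD j 0 = μ[j] := List.getD_eq_getElem μ 0 hj
  rw [hgj] at hkj hpos
  rw [hgi] at hki
  have hlen : lam.length = μ.length := by simp [hlam]
  have hforall : List.Forall₂ (· ≤ ·) (μ.map (fun x => Nat.dist x k))
      (lam.map (fun x => Nat.dist x k)) := by
    rw [List.forall₂_iff_get]
    refine ⟨by simp [hlen], ?_⟩
    intro x h₁ h₂
    simp only [List.length_map] at h₁ h₂
    simp only [List.get_eq_getElem, List.getElem_map]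
    subst hlam
    rw [List.getElem_set, List.getElem_set]
    by_cases h1 : j = x
    · rw [if_pos h1, hgj]
      subst h1
      simp only [Nat.dist]
      omega
    · rw [if_neg h1]
      by_cases h2 : i = x
      · rw [if_pos h2, hgi]
        subst h2
        simp only [Nat.dist]
        omega
      · rw [if_neg h2]
  exact dominates_sort_of_forall₂ hforall
end

section
/- Let μ = (μ_1,…,μ_ℓ) be a non-increasing sequence of non-negative integers, let 1 ≤ i < j ≤ ℓ, and suppose λ defined by λ_i = μ_i + 1, λ_j = μ_j − 1 (with μ_j ≥ 1) and λ_p = μ_p for p ∉ {i,j} is non-increasing. If k is a positive integer with k > μ_i, then λ^(k) dominates μ^(k). -/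
namespace OpkAux

/-- count of entries `≥ r`. -/
def cnt (r : ℕ) (l : List ℕ) : ℕ := l.countP (fun x => decide (r ≤ x))

lemma cnt_cons (r x : ℕ) (l : List ℕ) :
    cnt r (x :: l) = cnt r l + if r ≤ x then 1 else 0 := by
  simp [cnt, List.countP_cons]

lemma cnt_take (l : List ℕ) (h : l.Pairwise (· ≥ ·)) (r n : ℕ) :
    cnt r (l.take n) = min n (cnt r l) := by
  induction l generalizing n with
  | nil => simp [cnt]
  | cons x t ih =>
    rcases List.pairwise_cons.mp h with ⟨hx, ht⟩
    cases n with
    | zero => simp [cnt]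
    | succ m =>
      rw [List.take_succ_cons, cnt_cons, cnt_cons, ih ht]
      by_cases hrx : r ≤ x
      · simp only [hrx, if_pos]
        omega
      · have h0 : cnt r t = 0 := by
          simp only [cnt, List.countP_eq_zero]
          intro y hy
          simp only [decide_eq_true_eq]
          have := hx y hy
          omega
        have h1 : cnt r (t.take m) ≤ cnt r t :=
          List.Sublist.countP_le (List.take_sublist m t)
        simp only [hrx, if_neg, not_false_iff]
        omega

lemma sum_eq_cnt (l : List ℕ) (R : ℕ) (h : ∀ x ∈ l, x ≤ R) :
    l.sum = ∑ r ∈ Finset.Icc 1 R, cnt r l := by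
  induction l with
  | nil => simp [cnt]
  | cons x t ih =>
    have hx : x ≤ R := h x (List.mem_cons_self)
    have ht : ∀ y ∈ t, y ≤ R := fun y hy => h y (List.mem_cons_of_mem x hy)
    simp only [List.sum_cons, ih ht, cnt_cons, Finset.sum_add_distrib]
    have hite : ∑ r ∈ Finset.Icc 1 R, (if r ≤ x then 1 else 0) = x := by
      rw [← Finset.sum_filter]
      have hfil : (Finset.Icc 1 R).filter (fun r => r ≤ x) = Finset.Icc 1 x := by
        ext r
        simp only [Finset.mem_filter, Finset.mem_Icc]
        omega
      simp [hfil]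
    omega

lemma take_sum_eq (l : List ℕ) (h : l.Pairwise (· ≥ ·)) (R : ℕ)
    (hR : ∀ x ∈ l, x ≤ R) (n : ℕ) :
    (l.take n).sum = ∑ r ∈ Finset.Icc 1 R, min n (cnt r l) := by
  rw [sum_eq_cnt (l.take n) R (fun x hx => hR x ((List.take_sublist n l).mem hx))]
  exact Finset.sum_congr rfl fun r _ => cnt_take l h r n

lemma sort_eq_sort_of_perm (u v : List ℕ) (h : u.Perm v) :
    u.insertionSort (· ≥ ·) = v.insertionSort (· ≥ ·) := by
  refine List.Perm.eq_of_pairwise' (List.pairwise_insertionSort (· ≥ ·) u)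
    (List.pairwise_insertionSort (· ≥ ·) v) ?_
  exact ((u.perm_insertionSort (· ≥ ·)).trans h).trans
    (v.perm_insertionSort (· ≥ ·)).symm

/-- Key combinatorial lemma: moving one unit from a smaller part to a larger part
increases the dominance order of the sorted sequence. -/
lemma key (a b : ℕ) (rest : List ℕ) (ha : 1 ≤ a) (hab : a ≤ b) :
    Dominates (List.insertionSort (· ≥ ·) ((a - 1) :: (b + 1) :: rest))
      (List.insertionSort (· ≥ ·) (a :: b :: rest)) := by
  intro n
  set R : ℕ := b + 1 + rest.sum with hRdef
  have hrestR : ∀ x ∈ rest, x ≤ R := by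
    intro x hx
    have := List.single_le_sum (fun y (_ : y ∈ rest) => Nat.zero_le y) x hx
    omega
  have huR : ∀ x ∈ List.insertionSort (· ≥ ·) (a :: b :: rest), x ≤ R := by
    intro x hx
    have hx' : x ∈ a :: b :: rest :=
      ((a :: b :: rest).perm_insertionSort (· ≥ ·)).mem_iff.mp hx
    rw [List.mem_cons, List.mem_cons] at hx'
    rcases hx' with h | h | h
    · omega
    · omega
    · exact hrestR x h
  have hvR : ∀ x ∈ List.insertionSort (· ≥ ·) ((a - 1) :: (b + 1) :: rest), x ≤ R := by
    intro x hx
    have hx' : x ∈ (a - 1) :: (b + 1) :: rest :=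
      (((a - 1) :: (b + 1) :: rest).perm_insertionSort (· ≥ ·)).mem_iff.mp hx
    rw [List.mem_cons, List.mem_cons] at hx'
    rcases hx' with h | h | h
    · omega
    · omega
    · exact hrestR x h
  have hcu : ∀ r, cnt r (List.insertionSort (· ≥ ·) (a :: b :: rest))
      = cnt r (a :: b :: rest) := fun r =>
    ((a :: b :: rest).perm_insertionSort (· ≥ ·)).countP_eq _
  have hcv : ∀ r, cnt r (List.insertionSort (· ≥ ·) ((a - 1) :: (b + 1) :: rest))
      = cnt r ((a - 1) :: (b + 1) :: rest) := fun r =>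
    (((a - 1) :: (b + 1) :: rest).perm_insertionSort (· ≥ ·)).countP_eq _
  rw [take_sum_eq _ (List.pairwise_insertionSort (· ≥ ·) (a :: b :: rest)) R huR n,
      take_sum_eq _ (List.pairwise_insertionSort (· ≥ ·) ((a - 1) :: (b + 1) :: rest)) R hvR n]
  simp only [hcu, hcv]
  -- split off r = a and r = b + 1
  have haI : a ∈ Finset.Icc 1 R := by
    simp only [Finset.mem_Icc]; omega
  have hane : a ≠ b + 1 := by omega
  set s : Finset ℕ := ((Finset.Icc 1 R).erase a).erase (b + 1) with hs
  have hsplit : Finset.Icc 1 R = insert a (insert (b + 1) s) := by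
    rw [hs, Finset.insert_erase, Finset.insert_erase haI]
    rw [Finset.mem_erase]
    refine ⟨by omega, ?_⟩
    simp only [Finset.mem_Icc]; omega
  have hanotin : a ∉ insert (b + 1) s := by
    simp [hs, hane]
  have hbnotin : (b + 1) ∉ s := by
    simp [hs]
  rw [hsplit, Finset.sum_insert hanotin, Finset.sum_insert hbnotin,
      Finset.sum_insert hanotin, Finset.sum_insert hbnotin]
  have hsum_eq : ∑ r ∈ s, min n (cnt r ((a - 1) :: (b + 1) :: rest))
      = ∑ r ∈ s, min n (cnt r (a :: b :: rest)) := by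
    apply Finset.sum_congr rfl
    intro r hr
    have hra : r ≠ a := by
      simp only [hs, Finset.mem_erase] at hr; exact hr.2.1
    have hrb : r ≠ b + 1 := by
      simp only [hs, Finset.mem_erase] at hr; exact hr.1
    have : cnt r ((a - 1) :: (b + 1) :: rest) = cnt r (a :: b :: rest) := by
      rw [cnt_cons, cnt_cons, cnt_cons, cnt_cons]
      split_ifs <;> omega
    rw [this]
  rw [hsum_eq]
  have hmono : cnt (b + 1) rest ≤ cnt a rest := by
    apply List.countP_mono_left
    intro x _ hx
    simp only [decide_eq_true_eq] at *
    omega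
  have hca : cnt a (a :: b :: rest) = cnt a rest + 2 := by
    rw [cnt_cons, cnt_cons]
    split_ifs <;> omega
  have hca' : cnt a ((a - 1) :: (b + 1) :: rest) = cnt a rest + 1 := by
    rw [cnt_cons, cnt_cons]
    split_ifs <;> omega
  have hcb : cnt (b + 1) (a :: b :: rest) = cnt (b + 1) rest := by
    rw [cnt_cons, cnt_cons]
    split_ifs <;> omega
  have hcb' : cnt (b + 1) ((a - 1) :: (b + 1) :: rest) = cnt (b + 1) rest + 1 := by
    rw [cnt_cons, cnt_cons]
    split_ifs <;> omega
  rw [hca, hca', hcb, hcb']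
  omega

lemma perm_set_cons_eraseIdx (l : List ℕ) (j : ℕ) (hj : j < l.length) (y : ℕ) :
    (l.set j y).Perm (y :: l.eraseIdx j) := by
  induction l generalizing j with
  | nil => simp at hj
  | cons z t ih =>
    cases j with
    | zero => simp
    | succ j' =>
      simp only [List.set_cons_succ, List.eraseIdx_cons_succ]
      exact ((ih j' (by simpa using hj) ).cons z).trans (List.Perm.swap _ _ _)

lemma perm_set_set (l : List ℕ) (i j : ℕ) (hij : i < j) (hj : j < l.length)
    (x y : ℕ) :
    ((l.set i x).set j y).Perm (x :: y :: (l.eraseIdx j).eraseIdx i) := by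
  induction l generalizing i j with
  | nil => simp at hj
  | cons z t ih =>
    cases j with
    | zero => omega
    | succ j' =>
      cases i with
      | zero =>
        simp only [List.set_cons_zero, List.set_cons_succ,
          List.eraseIdx_cons_succ, List.eraseIdx_cons_zero]
        exact (perm_set_cons_eraseIdx t j' (by simpa using hj) y).cons x
      | succ i' =>
        simp only [List.set_cons_succ, List.eraseIdx_cons_succ]
        refine ((ih i' j' (by omega) (by simpa using hj)).cons z).trans ?_
        exact (List.Perm.swap _ _ _).trans ((List.Perm.swap _ _ _).cons x)

lemma set_getElem_self' (l : List ℕ) : ∀ (i : ℕ) (h : i < l.length),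
    l.set i l[i] = l := by
  induction l with
  | nil => intro i h; simp at h
  | cons z t ih =>
    intro i h
    cases i with
    | zero => simp
    | succ i' => simp [ih i' (by simpa using h)]

end OpkAux

open OpkAux in
theorem opk_dominance_case_k_gt
    (μ : List ℕ) (hμsort : μ.Pairwise (· ≥ ·))
    (i j : ℕ) (hij : i < j) (hj : j < μ.length)
    (hpos : 1 ≤ μ.getD j 0)
    (lam : List ℕ)
    (hlam : lam = (μ.set i (μ.getD i 0 + 1)).set j (μ.getD j 0 - 1))
    (hlamsort : lam.Pairwise (· ≥ ·))
    (k : ℕ) (hk : 0 < k) (hki : μ.getD i 0 < k) :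
    Dominates (opk k lam) (opk k μ) := by
  have hi : i < μ.length := lt_trans hij hj
  have hgi : μ.getD i 0 = μ[i] := List.getD_eq_getElem μ 0 hi
  have hgj : μ.getD j 0 = μ[j] := List.getD_eq_getElem μ 0 hj
  have hji : μ[j] ≤ μ[i] := List.pairwise_iff_getElem.mp hμsort i j hi hj hij
  set f : ℕ → ℕ := fun x => Nat.dist x k with hf
  have hfval : ∀ x, x ≤ k → f x = k - x := by
    intro x hx
    simp only [hf]
    exact Nat.dist_eq_sub_of_le hx
  set a : ℕ := k - μ[i] with hadef
  set b : ℕ := k - μ[j] with hbdef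
  have hki' : μ[i] < k := by rwa [hgi] at hki
  have ha : 1 ≤ a := by omega
  have hab : a ≤ b := by omega
  set m : List ℕ := μ.map f with hm
  have hmi : i < m.length := by simpa [hm] using hi
  have hmj : j < m.length := by simpa [hm] using hj
  have hmset : m = (m.set i a).set j b := by
    have h1 : m[i] = a := by
      simp only [hm, List.getElem_map]
      rw [hfval μ[i] (by omega)]
    have h2 : m[j] = b := by
      simp only [hm, List.getElem_map]
      rw [hfval μ[j] (by omega)]
    rw [← h1, ← h2, set_getElem_self', set_getElem_self']
  have hlamm : lam.map f = (m.set i (a - 1)).set j (b + 1) := by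
    rw [hlam, List.map_set, List.map_set]
    rw [hfval (μ.getD i 0 + 1) (by omega),
        hfval (μ.getD j 0 - 1) (by rw [hgj]; omega)]
    rw [hgi, hgj]
    have e1 : k - (μ[i] + 1) = a - 1 := by omega
    have e2 : k - (μ[j] - 1) = b + 1 := by
      rw [hgj] at hpos
      omega
    rw [e1, e2]
  set rest : List ℕ := (m.eraseIdx j).eraseIdx i with hrest
  have hperm1 : m.Perm (a :: b :: rest) := by
    conv_lhs => rw [hmset]
    exact perm_set_set m i j hij hmj a b
  have hperm2 : (lam.map f).Perm ((a - 1) :: (b + 1) :: rest) := by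
    rw [hlamm]
    exact perm_set_set m i j hij hmj (a - 1) (b + 1)
  have e1 : opk k μ = List.insertionSort (· ≥ ·) (a :: b :: rest) :=
    sort_eq_sort_of_perm _ _ hperm1
  have e2 : opk k lam = List.insertionSort (· ≥ ·) ((a - 1) :: (b + 1) :: rest) :=
    sort_eq_sort_of_perm _ _ hperm2
  rw [e1, e2]
  exact key a b rest ha hab
end
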